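/- arXiv:1603.05809 — 2 statements merged into one kernel-verified Lean document; each statement's English description precedes it below -/
import Mathlib

section
/- The derivative at z = 1 of the function z ↦ Γ(z)^{−1} ∏_p (1 + z/(p−1))(1 − 1/p)^z equals c₁ = γ + Σ_p (log(1 − 1/p) + 1/p), the Mertens constant. -/
open Complex

namespace MertensAux

/-- The log of the `p`-th factor of the product. -/
noncomputable def g (p : Nat.Primes) (z : ℂ) : ℂ :=
  Complex.log (1 + z / ((p : ℕ) - 1 : ℂ)) + z * Complex.log (1 - 1 / ((p : ℕ) : ℂ))

/-- The derivative of `g p`. -/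
noncomputable def g' (p : Nat.Primes) (z : ℂ) : ℂ :=
  (((p : ℕ) : ℂ) - 1 + z)⁻¹ + Complex.log (1 - 1 / ((p : ℕ) : ℂ))

lemma two_le (p : Nat.Primes) : (2 : ℝ) ≤ ((p : ℕ) : ℝ) := by exact_mod_cast p.2.two_le

lemma base_pos (p : Nat.Primes) : (0 : ℝ) < 1 - 1 / ((p : ℕ) : ℝ) := by
  have := two_le p
  rw [sub_pos, div_lt_one (by linarith)]
  linarith

lemma base_eq (p : Nat.Primes) :
    (1 - 1 / ((p : ℕ) : ℂ)) = ((1 - 1 / ((p : ℕ) : ℝ) : ℝ) : ℂ) := by push_cast; ring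

lemma log_base (p : Nat.Primes) :
    Complex.log (1 - 1 / ((p : ℕ) : ℂ)) = ((Real.log (1 - 1 / ((p : ℕ) : ℝ)) : ℝ) : ℂ) := by
  rw [base_eq, Complex.ofReal_log (base_pos p).le]

lemma base_ne (p : Nat.Primes) : (1 - 1 / ((p : ℕ) : ℂ)) ≠ 0 := by
  rw [base_eq]
  exact_mod_cast (base_pos p).ne'

lemma cm1_eq (p : Nat.Primes) :
    (((p : ℕ) : ℂ) - 1) = ((((p : ℕ) : ℝ) - 1 : ℝ) : ℂ) := by push_cast; ring

lemma cm1_ne (p : Nat.Primes) : (((p : ℕ) : ℂ) - 1) ≠ 0 := by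
  have := two_le p
  rw [cm1_eq]
  exact_mod_cast (by linarith : ((p : ℕ) : ℝ) - 1 ≠ 0)

lemma re_gt {z : ℂ} (hz : z ∈ Metric.ball (1 : ℂ) (1 / 2)) : 1 / 2 < z.re := by
  rw [Metric.mem_ball, Complex.dist_eq] at hz
  have h := lt_of_le_of_lt (Complex.abs_re_le_norm (z - 1)) hz
  rw [abs_lt] at h
  have := h.1
  simp only [Complex.sub_re, Complex.one_re] at this
  linarith

lemma w1_re_pos (p : Nat.Primes) {z : ℂ} (hz : z ∈ Metric.ball (1 : ℂ) (1 / 2)) :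
    0 < (1 + z / (((p : ℕ) : ℂ) - 1)).re := by
  have hp := two_le p
  have hzre := re_gt hz
  rw [cm1_eq]
  have : (z / ((((p : ℕ) : ℝ) - 1 : ℝ) : ℂ)).re = z.re / (((p : ℕ) : ℝ) - 1) := by
    rw [Complex.div_ofReal_re]
  rw [Complex.add_re, Complex.one_re, this]
  have : 0 < z.re / (((p : ℕ) : ℝ) - 1) := div_pos (by linarith) (by linarith)
  linarith

lemma w1_ne (p : Nat.Primes) {z : ℂ} (hz : z ∈ Metric.ball (1 : ℂ) (1 / 2)) :
    (1 + z / (((p : ℕ) : ℂ) - 1)) ≠ 0 := by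
  intro h
  have := w1_re_pos p hz
  rw [h] at this
  simp at this

lemma hasDerivAt_g (p : Nat.Primes) {z : ℂ} (hz : z ∈ Metric.ball (1 : ℂ) (1 / 2)) :
    HasDerivAt (g p) (g' p z) z := by
  have hc := cm1_ne p
  have hw := w1_ne p hz
  have h1 : HasDerivAt (fun z : ℂ => 1 + z / (((p : ℕ) : ℂ) - 1))
      (1 / (((p : ℕ) : ℂ) - 1)) z := by
    simpa using ((hasDerivAt_id z).div_const (((p : ℕ) : ℂ) - 1)).const_add 1
  have h2 : HasDerivAt (fun z : ℂ => Complex.log (1 + z / (((p : ℕ) : ℂ) - 1)))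
      ((1 / (((p : ℕ) : ℂ) - 1)) / (1 + z / (((p : ℕ) : ℂ) - 1))) z :=
    h1.clog (Or.inl (w1_re_pos p hz))
  have h3 : HasDerivAt (fun z : ℂ => z * Complex.log (1 - 1 / ((p : ℕ) : ℂ)))
      (Complex.log (1 - 1 / ((p : ℕ) : ℂ))) z := by
    simpa using (hasDerivAt_id z).mul_const (Complex.log (1 - 1 / ((p : ℕ) : ℂ)))
  have h4 := h2.add h3
  have hD : (((p : ℕ) : ℂ) - 1 + z) ≠ 0 := by
    have hfac : ((p : ℕ) : ℂ) - 1 + z = (((p : ℕ) : ℂ) - 1) * (1 + z / (((p : ℕ) : ℂ) - 1)) := by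
      field_simp
    rw [hfac]
    exact mul_ne_zero hc hw
  have he : (1 / (((p : ℕ) : ℂ) - 1)) / (1 + z / (((p : ℕ) : ℂ) - 1))
      = (((p : ℕ) : ℂ) - 1 + z)⁻¹ := by
    field_simp
  rw [he] at h4
  exact h4

lemma real_bound (p : Nat.Primes) :
    |Real.log (1 - 1 / ((p : ℕ) : ℝ)) + 1 / ((p : ℕ) : ℝ)| ≤ 2 / ((p : ℕ) : ℝ) ^ 2 := by
  have hp := two_le p
  set x : ℝ := 1 / ((p : ℕ) : ℝ) with hx
  have hx0 : 0 < x := by positivity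
  have hxh : x ≤ 1 / 2 := by
    rw [hx, div_le_div_iff₀ (by linarith) (by norm_num)]
    linarith
  have habs : |x| < 1 := by rw [abs_of_pos hx0]; linarith
  have h := Real.abs_log_sub_add_sum_range_le habs 1
  simp only [Finset.sum_range_one, pow_one, Nat.cast_one] at h
  have h' : |x + Real.log (1 - x)| ≤ |x| ^ 2 / (1 - |x|) := by
    convert h using 3 <;> norm_num
  rw [abs_of_pos hx0] at h'
  have hb : x ^ 2 / (1 - x) ≤ 2 * x ^ 2 := by
    rw [div_le_iff₀ (by linarith)]
    nlinarith
  have : |Real.log (1 - x) + x| ≤ 2 * x ^ 2 := by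
    rw [add_comm]; exact h'.trans hb
  calc |Real.log (1 - x) + x| ≤ 2 * x ^ 2 := this
    _ = 2 / ((p : ℕ) : ℝ) ^ 2 := by rw [hx]; field_simp

lemma g'_bound (p : Nat.Primes) {z : ℂ} (hz : z ∈ Metric.ball (1 : ℂ) (1 / 2)) :
    ‖g' p z‖ ≤ 3 / ((p : ℕ) : ℝ) ^ 2 := by
  have hp := two_le p
  have hzre := re_gt hz
  set N : ℂ := ((p : ℕ) : ℂ) with hN
  have hNne : N ≠ 0 := by
    rw [hN]
    exact_mod_cast (by positivity : (((p : ℕ) : ℝ)) ≠ 0)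
  have hDre : (p : ℕ) - 1 + z.re ≤ (N - 1 + z).re := by
    simp [hN, Complex.add_re, Complex.sub_re]
  have hDge : ((p : ℕ) : ℝ) - 1 / 2 ≤ ‖N - 1 + z‖ := by
    have h1 : (N - 1 + z).re ≤ ‖N - 1 + z‖ := Complex.re_le_norm _
    have h2 : ((p : ℕ) : ℝ) - 1 + z.re ≤ (N - 1 + z).re := hDre
    linarith
  have hDne : N - 1 + z ≠ 0 := by
    intro h
    rw [h] at hDge
    simp at hDge
    linarith
  have hsplit : g' p z = (1 - z) / ((N - 1 + z) * N) + (N⁻¹ + Complex.log (1 - 1 / N)) := by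
    rw [g']
    have : (N - 1 + z)⁻¹ = (1 - z) / ((N - 1 + z) * N) + N⁻¹ := by
      field_simp
      ring
    rw [← hN, this]
    ring
  rw [hsplit]
  have hb2 : ‖N⁻¹ + Complex.log (1 - 1 / N)‖ ≤ 2 / ((p : ℕ) : ℝ) ^ 2 := by
    have : N⁻¹ + Complex.log (1 - 1 / N)
        = ((Real.log (1 - 1 / ((p : ℕ) : ℝ)) + 1 / ((p : ℕ) : ℝ) : ℝ) : ℂ) := by
      rw [hN, log_base]
      push_cast
      ring
    rw [this, Complex.norm_real, Real.norm_eq_abs]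
    exact real_bound p
  have hb1 : ‖(1 - z) / ((N - 1 + z) * N)‖ ≤ 1 / ((p : ℕ) : ℝ) ^ 2 := by
    rw [norm_div, norm_mul]
    have hz1 : ‖1 - z‖ ≤ 1 / 2 := by
      rw [Metric.mem_ball, Complex.dist_eq] at hz
      have : ‖1 - z‖ = ‖z - 1‖ := by
        rw [← norm_neg]; congr 1; ring
      rw [this]
      exact hz.le
    have hNnorm : ‖N‖ = ((p : ℕ) : ℝ) := by
      rw [hN, Complex.norm_natCast]
    have hpos : (0 : ℝ) < ‖N - 1 + z‖ * ‖N‖ := by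
      apply mul_pos
      · linarith
      · rw [hNnorm]; linarith
    rw [div_le_div_iff₀ hpos (by positivity)]
    have h1 : (((p : ℕ) : ℝ) - 1 / 2) * ((p : ℕ) : ℝ) ≤ ‖N - 1 + z‖ * ‖N‖ := by
      rw [hNnorm]
      apply mul_le_mul_of_nonneg_right hDge (by linarith)
    nlinarith [norm_nonneg (1 - z), norm_nonneg (N - 1 + z)]
  calc ‖(1 - z) / ((N - 1 + z) * N) + (N⁻¹ + Complex.log (1 - 1 / N))‖
      ≤ ‖(1 - z) / ((N - 1 + z) * N)‖ + ‖N⁻¹ + Complex.log (1 - 1 / N)‖ := norm_add_le _ _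
    _ ≤ 1 / ((p : ℕ) : ℝ) ^ 2 + 2 / ((p : ℕ) : ℝ) ^ 2 := add_le_add hb1 hb2
    _ = 3 / ((p : ℕ) : ℝ) ^ 2 := by ring

lemma summable_u : Summable (fun p : Nat.Primes => 3 / ((p : ℕ) : ℝ) ^ 2) := by
  have h : Summable (fun n : ℕ => 3 / (n : ℝ) ^ 2) := by
    have := (Real.summable_one_div_nat_pow (p := 2)).mpr one_lt_two
    simpa [div_eq_mul_inv, mul_comm] using this.mul_left 3
  exact h.comp_injective Subtype.val_injective

lemma g_one (p : Nat.Primes) : g p 1 = 0 := by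
  have hp := two_le p
  have h1 : (1 : ℂ) + 1 / (((p : ℕ) : ℂ) - 1) = ((1 + 1 / (((p : ℕ) : ℝ) - 1) : ℝ) : ℂ) := by
    rw [cm1_eq]; push_cast; ring
  have h0 : (0 : ℝ) < ((p : ℕ) : ℝ) - 1 := by linarith
  have hpos : (0 : ℝ) < 1 + 1 / (((p : ℕ) : ℝ) - 1) := by
    have := div_pos one_pos h0; linarith
  rw [g, one_mul, h1, ← Complex.ofReal_log hpos.le, log_base, ← Complex.ofReal_add]
  rw [show Real.log (1 + 1 / (((p : ℕ) : ℝ) - 1)) + Real.log (1 - 1 / ((p : ℕ) : ℝ))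
      = Real.log ((1 + 1 / (((p : ℕ) : ℝ) - 1)) * (1 - 1 / ((p : ℕ) : ℝ))) by
    rw [Real.log_mul hpos.ne' (base_pos p).ne']]
  rw [show (1 + 1 / (((p : ℕ) : ℝ) - 1)) * (1 - 1 / ((p : ℕ) : ℝ)) = 1 by
    field_simp; ring]
  simp

lemma summable_g_one : Summable (fun p : Nat.Primes => g p 1) := by
  simp only [g_one]
  exact summable_zero

lemma hasDerivAt_tsum_g :
    HasDerivAt (fun z : ℂ => ∑' p : Nat.Primes, g p z) (∑' p : Nat.Primes, g' p 1) 1 :=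
  hasDerivAt_tsum_of_isPreconnected summable_u Metric.isOpen_ball
    (convex_ball _ _).isPreconnected (fun p z hz => hasDerivAt_g p hz)
    (fun p z hz => g'_bound p hz) (Metric.mem_ball_self (by norm_num)) summable_g_one
    (Metric.mem_ball_self (by norm_num))

lemma summable_g {z : ℂ} (hz : z ∈ Metric.ball (1 : ℂ) (1 / 2)) :
    Summable (fun p : Nat.Primes => g p z) :=
  summable_of_summable_hasDerivAt_of_isPreconnected summable_u Metric.isOpen_ball
    (convex_ball _ _).isPreconnected (fun p z hz => hasDerivAt_g p hz)
    (fun p z hz => g'_bound p hz) (Metric.mem_ball_self (by norm_num)) summable_g_one hz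

lemma g'_one (p : Nat.Primes) :
    g' p 1 = ((Real.log (1 - 1 / ((p : ℕ) : ℝ)) + 1 / ((p : ℕ) : ℝ) : ℝ) : ℂ) := by
  rw [g', log_base, sub_add_cancel]
  push_cast
  ring

lemma summable_real : Summable (fun p : Nat.Primes =>
    Real.log (1 - 1 / ((p : ℕ) : ℝ)) + 1 / ((p : ℕ) : ℝ)) := by
  apply Summable.of_norm_bounded summable_u
  intro p
  rw [Real.norm_eq_abs]
  have hp := two_le p
  have hc : (0 : ℝ) < ((p : ℕ) : ℝ) ^ 2 := by nlinarith
  refine (real_bound p).trans ?_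
  gcongr
  norm_num

lemma factor_eq (p : Nat.Primes) {z : ℂ} (hz : z ∈ Metric.ball (1 : ℂ) (1 / 2)) :
    Complex.exp (g p z)
      = (1 + z / ((p : ℕ) - 1 : ℂ)) * ((1 - 1 / ((p : ℕ) : ℂ)) ^ z) := by
  rw [g, Complex.exp_add, Complex.exp_log (w1_ne p hz)]
  congr 1
  rw [Complex.cpow_def_of_ne_zero (base_ne p), mul_comm]

lemma prod_eq {z : ℂ} (hz : z ∈ Metric.ball (1 : ℂ) (1 / 2)) :
    (∏' p : Nat.Primes, ((1 + z / ((p : ℕ) - 1 : ℂ)) * ((1 - 1 / ((p : ℕ) : ℂ)) ^ z)))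
      = Complex.exp (∑' p : Nat.Primes, g p z) := by
  have hfe : (fun p : Nat.Primes => (1 + z / ((p : ℕ) - 1 : ℂ)) * ((1 - 1 / ((p : ℕ) : ℂ)) ^ z))
      = (Complex.exp ∘ fun p : Nat.Primes => g p z) :=
    funext fun p => (factor_eq p hz).symm
  rw [hfe]
  exact ((summable_g hz).hasSum.cexp).tprod_eq

end MertensAux

open MertensAux in
/-- The derivative at `z = 1` of `z ↦ Γ(z)⁻¹ ∏_p (1 + z/(p-1))(1 - 1/p)^z` is
the Mertens constant `c₁ = γ + ∑_p (log(1 - 1/p) + 1/p)`. -/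
theorem hasDerivAt_A_one :
    HasDerivAt
      (fun z : ℂ => (Complex.Gamma z)⁻¹ *
        ∏' p : Nat.Primes, ((1 + z / ((p : ℕ) - 1 : ℂ)) * ((1 - 1 / ((p : ℕ) : ℂ)) ^ z)))
      ((Real.eulerMascheroniConstant +
          ∑' p : Nat.Primes, (Real.log (1 - 1 / (p : ℝ)) + 1 / (p : ℝ)) : ℝ) : ℂ)
      1 := by
  have hball : (1 : ℂ) ∈ Metric.ball (1 : ℂ) (1 / 2) := Metric.mem_ball_self (by norm_num)
  -- derivative of Γ⁻¹ at 1 is γ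
  have hG : HasDerivAt (fun z : ℂ => (Complex.Gamma z)⁻¹)
      ((Real.eulerMascheroniConstant : ℂ)) 1 := by
    have h := Complex.hasDerivAt_Gamma_one.inv (by simp [Complex.Gamma_one])
    simp only [Complex.Gamma_one, one_pow, div_one, neg_neg] at h
    exact h
  -- derivative of exp of the sum at 1
  have hsum0 : (∑' p : Nat.Primes, g p 1) = 0 := by simp [g_one]
  have hE : HasDerivAt (fun z : ℂ => Complex.exp (∑' p : Nat.Primes, g p z))
      (∑' p : Nat.Primes, g' p 1) 1 := by
    have h := hasDerivAt_tsum_g.cexp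
    rwa [hsum0, Complex.exp_zero, one_mul] at h
  have hmul := hG.mul hE
  have heq : (fun z : ℂ => (Complex.Gamma z)⁻¹ *
        ∏' p : Nat.Primes, ((1 + z / ((p : ℕ) - 1 : ℂ)) * ((1 - 1 / ((p : ℕ) : ℂ)) ^ z)))
      =ᶠ[nhds (1 : ℂ)]
      (fun z : ℂ => (Complex.Gamma z)⁻¹ * Complex.exp (∑' p : Nat.Primes, g p z)) := by
    filter_upwards [Metric.isOpen_ball.mem_nhds hball] with z hz
    rw [prod_eq hz]
  refine (HasDerivAt.congr_of_eventuallyEq ?_ heq)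
  refine hmul.congr_deriv ?_
  rw [hsum0, Complex.exp_zero, Complex.Gamma_one, inv_one, one_mul, mul_one]
  have hS : (∑' p : Nat.Primes, g' p 1)
      = ((∑' p : Nat.Primes, (Real.log (1 - 1 / ((p : ℕ) : ℝ)) + 1 / ((p : ℕ) : ℝ)) : ℝ) : ℂ) := by
    rw [Complex.ofReal_tsum]
    exact tsum_congr fun p => g'_one p
  rw [hS]
  push_cast
  ring
end

section
/- Let X ≥ 20, T = log log X, and define Δ_X(τ) := (−iτ/(2π√T)) Σ_{ν ∈ ℤ, ν≠0} (e^{2iπν T}/(iν)) e^{−(τ + 2πν√T)²/2}. Then for every integer k with 1 ≤ k ≤ √T/(2π) and every u with |u| ≤ π√T, the term of Δ_X(2kπ√T + u) corresponding to ν = −k equals e^{−2ikπT}·e^{−u²/2}·(1 + u/(2kπ√T)), and the sum of all the other terms is O(e^{−T}) uniformly in such k and u. -/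
set_option maxHeartbeats 1000000


open Complex

/-- The `ν`-th term of the series defining `Δ_X(τ)`
(with `T = log log X`): `(-iτ/(2π√T)) (e^{2iπνT}/(iν)) e^{-(τ+2πν√T)²/2}`. -/
noncomputable def deltaTerm (T τ : ℝ) (ν : ℤ) : ℂ :=
  (-I * τ / (2 * Real.pi * Real.sqrt T)) *
    (Complex.exp (2 * Real.pi * I * ν * T) / (I * ν)) *
    Real.exp (-(τ + 2 * Real.pi * ν * Real.sqrt T) ^ 2 / 2)

lemma aux_nat_summable : Summable (fun n : ℕ => Real.exp (-|((n:ℤ):ℝ)|)) := by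
  have : (fun n : ℕ => Real.exp (-|((n:ℤ):ℝ)|)) = fun n : ℕ => Real.exp (-1) ^ n := by
    funext n
    rw [← Real.exp_nat_mul]
    congr 1
    push_cast
    rw [_root_.abs_of_nonneg (by positivity)]
    ring
  rw [this]
  exact summable_geometric_of_lt_one (Real.exp_pos _).le
    (Real.exp_lt_one_iff.mpr (by norm_num))

lemma aux_int_summable : Summable (fun m : ℤ => Real.exp (-|(m:ℝ)|)) := by
  apply Summable.of_nat_of_neg aux_nat_summable
  have : (fun n : ℕ => Real.exp (-|((-n:ℤ):ℝ)|)) = fun n : ℕ => Real.exp (-|((n:ℤ):ℝ)|) := by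
    funext n; push_cast; rw [abs_neg]
  rw [this]
  exact aux_nat_summable

lemma aux_int_tsum_le : ∑' m : ℤ, Real.exp (-|(m:ℝ)|) ≤ 4 := by
  have h2 : (fun n : ℕ => Real.exp (-|((-n:ℤ):ℝ)|)) = fun n : ℕ => Real.exp (-|((n:ℤ):ℝ)|) := by
    funext n; push_cast; rw [abs_neg]
  have hgeo : (fun n : ℕ => Real.exp (-|((n:ℤ):ℝ)|)) = fun n : ℕ => Real.exp (-1) ^ n := by
    funext n
    rw [← Real.exp_nat_mul]
    congr 1
    push_cast
    rw [_root_.abs_of_nonneg (by positivity)]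
    ring
  rw [Summable.tsum_of_nat_of_neg aux_nat_summable (by rw [h2]; exact aux_nat_summable)]
  rw [h2, hgeo]
  rw [tsum_geometric_of_lt_one (Real.exp_pos _).le (Real.exp_lt_one_iff.mpr (by norm_num))]
  have he : Real.exp (-1) ≤ 3/5 := by
    rw [Real.exp_neg]
    rw [inv_le_comm₀ (Real.exp_pos _) (by norm_num)]
    have := Real.add_one_le_exp (1:ℝ)
    linarith
  have hepos := Real.exp_pos (-1:ℝ)
  have h1 : (1 - Real.exp (-1))⁻¹ ≤ 5/2 := by
    rw [inv_le_comm₀ (by linarith) (by norm_num)]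
    linarith
  have h0 : Real.exp (-|((0:ℤ):ℝ)|) = 1 := by norm_num
  rw [h0]
  linarith

/-- Localization of `Δ_X` near the multiples of `2π√T`: at `τ = 2kπ√T + u` with
`|u| ≤ π√T`, the term `ν = -k` equals `e^{-2ikπT} e^{-u²/2}(1 + u/(2kπ√T))` and the
remaining terms contribute `O(e^{-T})`. -/
theorem deltaX_localization :
    ∃ C : ℝ, ∀ X : ℝ, X ≥ 20 →
      ∀ k : ℕ, 1 ≤ k →
        (k : ℝ) ≤ Real.sqrt (Real.log (Real.log X)) / (2 * Real.pi) →
      ∀ u : ℝ, |u| ≤ Real.pi * Real.sqrt (Real.log (Real.log X)) →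
        (deltaTerm (Real.log (Real.log X))
            (2 * k * Real.pi * Real.sqrt (Real.log (Real.log X)) + u) (-(k : ℤ)) =
          Complex.exp (-(2 * Real.pi * I * k * Real.log (Real.log X))) *
            Real.exp (-u ^ 2 / 2) *
            ((1 + u / (2 * k * Real.pi * Real.sqrt (Real.log (Real.log X))) : ℝ) : ℂ)) ∧
        ‖∑' ν : {ν : ℤ // ν ≠ 0 ∧ ν ≠ -(k : ℤ)},
            deltaTerm (Real.log (Real.log X))
              (2 * k * Real.pi * Real.sqrt (Real.log (Real.log X)) + u) ν‖ ≤
          C * Real.exp (-Real.log (Real.log X)) := by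
  refine ⟨4 * Real.exp 1, fun X _ k hk hk2 u hu => ?_⟩
  set T := Real.log (Real.log X) with hTdef
  set S := Real.sqrt T with hSdef
  set τ := 2 * (k:ℝ) * Real.pi * S + u with hτdef
  have hpi := Real.pi_pos
  have hpi3 := Real.pi_gt_three
  have hk1 : (1:ℝ) ≤ (k:ℝ) := by exact_mod_cast hk
  have hSge : 2 * Real.pi ≤ S := by
    have : (1:ℝ) ≤ S / (2 * Real.pi) := le_trans hk1 hk2
    calc 2 * Real.pi = 1 * (2 * Real.pi) := (one_mul _).symm
      _ ≤ S / (2 * Real.pi) * (2 * Real.pi) := by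
          apply mul_le_mul_of_nonneg_right this (by positivity)
      _ = S := by field_simp
  have hSpos : 0 < S := lt_of_lt_of_le (by positivity) hSge
  have hT : 0 < T := Real.sqrt_pos.mp hSpos
  have hTsq : S ^ 2 = T := Real.sq_sqrt hT.le
  have hT4 : 4 * Real.pi ^ 2 ≤ T := by nlinarith
  have h9 : (9:ℝ) ≤ Real.pi ^ 2 := by nlinarith [hpi3]
  have h9T : 9 * T ≤ Real.pi ^ 2 * T := mul_le_mul_of_nonneg_right h9 hT.le
  have hT36 : 36 ≤ T := by linarith
  have hpiT : 1 ≤ Real.pi ^ 2 * T := by linarith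
  constructor
  · -- exact identity for ν = -k
    have hS' : (S : ℂ) ≠ 0 := by exact_mod_cast hSpos.ne'
    have hk0 : (k : ℂ) ≠ 0 := by exact_mod_cast Nat.cast_ne_zero.mpr (by omega)
    have hpi' : (Real.pi : ℂ) ≠ 0 := by exact_mod_cast hpi.ne'
    rw [deltaTerm]
    have h1 : (-(2 * (k:ℝ) * Real.pi * S + u +
        2 * Real.pi * (((-(k:ℤ)) : ℤ) : ℝ) * S) ^ 2 / 2) = -u^2/2 := by
      push_cast; ring
    rw [h1]
    have h2 : Complex.exp (2 * (Real.pi:ℂ) * I * (((-(k:ℤ)) : ℤ) : ℂ) * (T:ℂ)) =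
        Complex.exp (-(2 * Real.pi * I * k * T)) := by
      congr 1; push_cast; ring
    rw [h2]
    push_cast
    field_simp
    ring_nf
    push_cast
    rw [hτdef, ← hSdef, mul_assoc, mul_inv_cancel₀ hS', mul_one]; push_cast; ring
  · -- tail bound
    set c := S * Real.exp (-(Real.pi ^ 2 * T) / 2) * Real.exp 1 with hcdef
    have hcpos : 0 < c := by positivity
    set g : ℤ → ℝ := fun m => c * Real.exp (-|(m:ℝ) + (k:ℝ)|) with hgdef
    have hg0 : ∀ m, 0 ≤ g m := fun m => by positivity
    have hgsum : Summable g := by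
      apply Summable.mul_left
      have := aux_int_summable.comp_injective (Equiv.addRight (k:ℤ)).injective
      have heq : ((fun m : ℤ => Real.exp (-|(m:ℝ)|)) ∘ (Equiv.addRight (k:ℤ))) =
          fun m : ℤ => Real.exp (-|(m:ℝ) + (k:ℝ)|) := by
        funext m
        simp only [Function.comp_apply, Equiv.coe_addRight]
        push_cast
        ring_nf
      rwa [heq] at this
    have hgtsum : ∑' m, g m ≤ c * 4 := by
      rw [hgdef, tsum_mul_left]
      apply mul_le_mul_of_nonneg_left _ hcpos.le
      have heq : ∑' m : ℤ, Real.exp (-|(m:ℝ) + (k:ℝ)|) = ∑' m : ℤ, Real.exp (-|(m:ℝ)|) := by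
        rw [← (Equiv.addRight (k:ℤ)).tsum_eq (fun m : ℤ => Real.exp (-|(m:ℝ)|))]
        congr 1
        funext m
        simp only [Equiv.coe_addRight]
        push_cast
        ring_nf
      rw [heq]
      exact aux_int_tsum_le
    -- termwise bound
    have hbound : ∀ ν : {ν : ℤ // ν ≠ 0 ∧ ν ≠ -(k : ℤ)},
        ‖deltaTerm T τ ν‖ ≤ g ν := by
      rintro ⟨ν, hν0, hνk⟩
      have hnorm : ‖deltaTerm T τ ν‖ = |τ| / (2 * Real.pi * S) * (1 / |(ν:ℝ)|) *
          Real.exp (-(τ + 2 * Real.pi * ν * S) ^ 2 / 2) := by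
        have e1 : ‖(-I * (τ:ℂ) / (2 * Real.pi * S))‖ = |τ| / (2 * Real.pi * S) := by
          rw [norm_div, norm_mul, norm_mul, norm_mul]
          simp [abs_of_pos hSpos, abs_of_pos hpi]
        have e2 : ‖Complex.exp (2 * Real.pi * I * (ν:ℂ) * T) / (I * ν)‖ = 1 / |(ν:ℝ)| := by
          rw [norm_div, norm_mul, Complex.norm_exp]
          have : (2 * (Real.pi:ℂ) * I * (ν:ℂ) * T).re = 0 := by simp
          rw [this, Real.exp_zero]
          simp
        have e3 : ‖((Real.exp (-(τ + 2 * Real.pi * ν * S) ^ 2 / 2) : ℝ) : ℂ)‖ =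
            Real.exp (-(τ + 2 * Real.pi * ν * S) ^ 2 / 2) := by
          rw [Complex.norm_real, Real.norm_eq_abs, abs_of_pos (Real.exp_pos _)]
        rw [deltaTerm, norm_mul, norm_mul, e1, e2, e3]
      rw [hnorm]
      set m : ℝ := (ν:ℝ) + (k:ℝ) with hmdef
      have hm1 : 1 ≤ |m| := by
        have : ν + (k:ℤ) ≠ 0 := fun h => hνk (by omega)
        have := Int.one_le_abs this
        calc (1:ℝ) ≤ |((ν + k : ℤ) : ℝ)| := by
              rw [← Int.cast_abs]; exact_mod_cast this
          _ = |m| := by push_cast; ring_nf; rw [hmdef]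
      have hν1 : 1 ≤ |(ν:ℝ)| := by
        have := Int.one_le_abs hν0
        rw [← Int.cast_abs]; exact_mod_cast this
      -- bound on first factor
      have b1 : |τ| / (2 * Real.pi * S) ≤ S := by
        rw [div_le_iff₀ (by positivity)]
        have hτabs : |τ| ≤ 2 * (k:ℝ) * Real.pi * S + |u| := by
          calc |τ| ≤ |2 * (k:ℝ) * Real.pi * S| + |u| := abs_add_le _ _
            _ = 2 * (k:ℝ) * Real.pi * S + |u| := by
                rw [_root_.abs_of_nonneg (by positivity)]
        have h2k : 2 * Real.pi * (k:ℝ) ≤ S := by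
          rw [div_eq_inv_mul] at hk2
          calc 2 * Real.pi * (k:ℝ) ≤ 2 * Real.pi * ((2*Real.pi)⁻¹ * S) := by
                apply mul_le_mul_of_nonneg_left _ (by positivity)
                rwa [mul_comm] at hk2 ⊢
            _ = S := by field_simp
        nlinarith [hu, abs_nonneg u]
      -- bound on second factor
      have b2 : 1 / |(ν:ℝ)| ≤ 1 := by
        rw [div_le_one (by linarith)]; exact hν1
      -- bound on exponential factor
      have harg : τ + 2 * Real.pi * (ν:ℝ) * S = 2 * Real.pi * m * S + u := by
        rw [hτdef, hmdef]; ring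
      have b3 : Real.exp (-(τ + 2 * Real.pi * ν * S) ^ 2 / 2) ≤
          Real.exp (-(Real.pi ^ 2 * T) / 2) * Real.exp 1 * Real.exp (-|m|) := by
        rw [← Real.exp_add, ← Real.exp_add, Real.exp_le_exp]
        have habs : Real.pi * S * (2 * |m| - 1) ≤ |2 * Real.pi * m * S + u| := by
          have h1 : |2 * Real.pi * m * S| ≤ |2 * Real.pi * m * S + u| + |u| := by
            calc |2 * Real.pi * m * S| = |(2 * Real.pi * m * S + u) + (-u)| := by ring_nf
              _ ≤ |2 * Real.pi * m * S + u| + |(-u)| := abs_add_le _ _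
              _ = |2 * Real.pi * m * S + u| + |u| := by rw [abs_neg]
          have h2 : |2 * Real.pi * m * S| = 2 * Real.pi * |m| * S := by
            rw [abs_mul, abs_mul, abs_mul]
            rw [_root_.abs_of_nonneg (by norm_num : (0:ℝ) ≤ 2), _root_.abs_of_pos hpi, _root_.abs_of_pos hSpos]
          nlinarith [hu]
        have hsq : (Real.pi * S * (2 * |m| - 1)) ^ 2 ≤ (2 * Real.pi * m * S + u) ^ 2 := by
          rw [← _root_.sq_abs (2 * Real.pi * m * S + u)]
          apply pow_le_pow_left₀ (mul_nonneg (mul_nonneg hpi.le hSpos.le) (by linarith)) habs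
        rw [harg]
        have hsq' : Real.pi ^ 2 * T * (2 * |m| - 1) ^ 2 ≤ (2 * Real.pi * m * S + u) ^ 2 := by
          calc Real.pi ^ 2 * T * (2 * |m| - 1) ^ 2
              = (Real.pi * S * (2 * |m| - 1)) ^ 2 := by rw [← hTsq]; ring
            _ ≤ _ := hsq
        have h4 : (1:ℝ) ≤ |m| * (Real.pi ^ 2 * T) := by
          nlinarith [mul_le_mul hm1 hpiT (by norm_num : (0:ℝ) ≤ 1) (abs_nonneg m)]
        have key : 0 ≤ (|m| - 1) * (4 * (|m| * (Real.pi ^ 2 * T)) - 2) :=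
          mul_nonneg (by linarith) (by linarith)
        have final : ∀ P Y a : ℝ, P * (2*a-1)^2 ≤ Y → 0 ≤ (a-1)*(4*(a*P)-2) →
            -Y/2 ≤ -P/2 + 1 + -a := by
          intro P Y a hh1 hh2; nlinarith [hh1, hh2]
        exact final (Real.pi ^ 2 * T) ((2 * Real.pi * m * S + u) ^ 2) |m| hsq' key
      calc |τ| / (2 * Real.pi * S) * (1 / |(ν:ℝ)|) *
            Real.exp (-(τ + 2 * Real.pi * ν * S) ^ 2 / 2)
          ≤ S * 1 * (Real.exp (-(Real.pi ^ 2 * T) / 2) * Real.exp 1 * Real.exp (-|m|)) := by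
            apply mul_le_mul (mul_le_mul b1 b2 (by positivity) hSpos.le) b3
              (Real.exp_pos _).le (by positivity)
        _ = g ν := by rw [hgdef]; simp only [hcdef]; ring_nf; rw [hmdef]
    have hgsub : Summable (fun ν : {ν : ℤ // ν ≠ 0 ∧ ν ≠ -(k : ℤ)} => g ν) :=
      hgsum.comp_injective Subtype.val_injective
    have hfsum : Summable (fun ν : {ν : ℤ // ν ≠ 0 ∧ ν ≠ -(k : ℤ)} =>
        ‖deltaTerm T τ ν‖) :=
      Summable.of_nonneg_of_le (fun _ => norm_nonneg _) hbound hgsub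
    calc ‖∑' ν : {ν : ℤ // ν ≠ 0 ∧ ν ≠ -(k : ℤ)}, deltaTerm T τ ν‖
        ≤ ∑' ν : {ν : ℤ // ν ≠ 0 ∧ ν ≠ -(k : ℤ)}, ‖deltaTerm T τ ν‖ :=
          norm_tsum_le_tsum_norm hfsum
      _ ≤ ∑' ν : {ν : ℤ // ν ≠ 0 ∧ ν ≠ -(k : ℤ)}, g ν :=
          Summable.tsum_le_tsum hbound hfsum hgsub
      _ ≤ ∑' m : ℤ, g m :=
          Summable.tsum_le_tsum_of_inj Subtype.val Subtype.val_injective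
            (fun n _ => hg0 n) (fun b => le_rfl) hgsub hgsum
      _ ≤ c * 4 := hgtsum
      _ ≤ 4 * Real.exp 1 * Real.exp (-T) := by
          rw [hcdef]
          have hS_le : S ≤ Real.exp (T / 2) := by
            have h1 : S ≤ (T + 1) / 2 := by nlinarith [hTsq, hSpos]
            have h2 : T / 2 + 1 ≤ Real.exp (T / 2) := Real.add_one_le_exp _
            linarith
          have key : S * Real.exp (-(Real.pi ^ 2 * T) / 2) ≤ Real.exp (-T) := by
            calc S * Real.exp (-(Real.pi ^ 2 * T) / 2)
                ≤ Real.exp (T / 2) * Real.exp (-(Real.pi ^ 2 * T) / 2) := by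
                  apply mul_le_mul_of_nonneg_right hS_le (Real.exp_pos _).le
              _ = Real.exp (T / 2 + -(Real.pi ^ 2 * T) / 2) := (Real.exp_add _ _).symm
              _ ≤ Real.exp (-T) := by
                  rw [Real.exp_le_exp]
                  have h9 : (9:ℝ) ≤ Real.pi ^ 2 := by nlinarith
                  have h9T : 9 * T ≤ Real.pi ^ 2 * T := mul_le_mul_of_nonneg_right h9 hT.le
                  linarith
          calc S * Real.exp (-(Real.pi ^ 2 * T) / 2) * Real.exp 1 * 4
              ≤ Real.exp (-T) * Real.exp 1 * 4 := by
                apply mul_le_mul_of_nonneg_right _ (by norm_num)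
                exact mul_le_mul_of_nonneg_right key (Real.exp_pos _).le
            _ = 4 * Real.exp 1 * Real.exp (-T) := by ring
end
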